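/- For t ∈ (−1,1) define c(t) = (1 + t²/2 + (t/2)·√(12 − 3t²))^{1/3} and a(t) = (1 − t²)/c(t)². Then: (i) 1 + t²/2 + (t/2)·√(12 − 3t²) > 0, so c(t) > 0; (ii) c(t)³ + (1 − t²)²/c(t)³ = 2 + t², equivalently c(t)⁶ − (2 + t²)·c(t)³ + (1 − t²)² = 0; (iii) a(t)·c(t)² + a(t)²·c(t) + c(t)³ = 3; (iv) c(t)³ − a(t)²·c(t) = t·√(12 − 3t²); and (v) setting A(t) = diag(a(t)c(t)², (a(t)²c(t)+c(t)³)/2, (a(t)²c(t)+c(t)³)/2), B(t) = diag(0, (c(t)³−a(t)²c(t))/2, (c(t)³−a(t)²c(t))/2), and λ(t) = a(t)²c(t)⁴, one has A(t)² − B(t)·B(t)ᵀ = λ(t)·I₃, tr A(t) = 3, and B(t)₁ⱼ = 0. Thus the relative-scaling variation of the Calabi ansatz defines a path in the parameter space 𝒫 through (I₃, 0, 1). -/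

import Mathlib

open Matrix

/-- The scaling function `c(t) = (1 + t²/2 + (t/2)√(12 − 3t²))^{1/3}` of the
relative-scaling variation of the Calabi ansatz. -/
noncomputable def calabiC (t : ℝ) : ℝ :=
  (1 + t ^ 2 / 2 + (t / 2) * Real.sqrt (12 - 3 * t ^ 2)) ^ ((1 : ℝ) / 3)

/-- The scaling function `a(t) = (1 − t²)/c(t)²`. -/
noncomputable def calabiA (t : ℝ) : ℝ := (1 - t ^ 2) / (calabiC t) ^ 2

/-- the relative-scaling variation of the Calabi ansatz defines a
path in the parameter space `𝒫` through `(I₃, 0, 1)`. -/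
theorem stmt_11 (t : ℝ) (ht : t ∈ Set.Ioo (-1 : ℝ) 1) :
    (0 < 1 + t ^ 2 / 2 + (t / 2) * Real.sqrt (12 - 3 * t ^ 2)) ∧
    (0 < calabiC t) ∧
    ((calabiC t) ^ 3 + (1 - t ^ 2) ^ 2 / (calabiC t) ^ 3 = 2 + t ^ 2) ∧
    ((calabiC t) ^ 6 - (2 + t ^ 2) * (calabiC t) ^ 3 + (1 - t ^ 2) ^ 2 = 0) ∧
    (calabiA t * (calabiC t) ^ 2 + (calabiA t) ^ 2 * calabiC t + (calabiC t) ^ 3 = 3) ∧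
    ((calabiC t) ^ 3 - (calabiA t) ^ 2 * calabiC t = t * Real.sqrt (12 - 3 * t ^ 2)) ∧
    (letI A : Matrix (Fin 3) (Fin 3) ℝ := Matrix.diagonal
        ![calabiA t * (calabiC t) ^ 2,
          ((calabiA t) ^ 2 * calabiC t + (calabiC t) ^ 3) / 2,
          ((calabiA t) ^ 2 * calabiC t + (calabiC t) ^ 3) / 2]
     letI B : Matrix (Fin 3) (Fin 3) ℝ := Matrix.diagonal
        ![0,
          ((calabiC t) ^ 3 - (calabiA t) ^ 2 * calabiC t) / 2,
          ((calabiC t) ^ 3 - (calabiA t) ^ 2 * calabiC t) / 2]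
     letI lam : ℝ := (calabiA t) ^ 2 * (calabiC t) ^ 4
     A * A - B * Bᵀ = lam • (1 : Matrix (Fin 3) (Fin 3) ℝ) ∧
       A.trace = 3 ∧ ∀ j : Fin 3, B 0 j = 0) := by
  obtain ⟨ht1, ht2⟩ := ht
  set s : ℝ := Real.sqrt (12 - 3 * t ^ 2) with hs
  have htsq : t ^ 2 < 1 := by nlinarith
  have hs2 : s ^ 2 = 12 - 3 * t ^ 2 := Real.sq_sqrt (by nlinarith)
  set u : ℝ := 1 + t ^ 2 / 2 + (t / 2) * s with hu_def
  set v : ℝ := 1 + t ^ 2 / 2 - (t / 2) * s with hv_def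
  have hsum : u + v = 2 + t ^ 2 := by simp only [hu_def, hv_def]; ring
  have huv : u * v = (1 - t ^ 2) ^ 2 := by
    simp only [hu_def, hv_def]; linear_combination (- t^2 / 4) * hs2
  have h1t : 0 < 1 - t ^ 2 := by nlinarith
  have hpos : (0:ℝ) < (1 - t ^ 2) ^ 2 := by positivity
  have hu : 0 < u := by
    by_contra h
    push_neg at h
    have hvpos : 0 < v := by nlinarith
    nlinarith [mul_nonneg hvpos.le (neg_nonneg.2 h)]
  have hv : 0 < v := by
    by_contra h
    push_neg at h
    nlinarith [mul_nonneg hu.le (neg_nonneg.2 h)]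
  have hc3 : (calabiC t) ^ 3 = u := by
    rw [calabiC, ← hs, ← hu_def, ← Real.rpow_natCast (u ^ ((1:ℝ)/3)) 3,
      ← Real.rpow_mul hu.le]
    norm_num
  have hc : 0 < calabiC t := Real.rpow_pos_of_pos hu _
  set c : ℝ := calabiC t
  have hx : (1 - t ^ 2) ^ 2 / c ^ 3 = v := by
    rw [hc3, div_eq_iff hu.ne']
    linear_combination -huv
  have hac2 : calabiA t * c ^ 2 = 1 - t ^ 2 := by
    rw [calabiA]; show (1 - t ^ 2) / c ^ 2 * c ^ 2 = 1 - t ^ 2; field_simp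
  have ha2c : (calabiA t) ^ 2 * c = v := by
    have h0 : calabiA t ^ 2 * c = (1 - t ^ 2) ^ 2 / c ^ 3 := by
      rw [calabiA]; show ((1 - t ^ 2) / c ^ 2) ^ 2 * c = (1 - t ^ 2) ^ 2 / c ^ 3; field_simp
    rw [h0, hx]
  refine ⟨hu, hc, ?_, ?_, ?_, ?_, ?_, ?_, ?_⟩
  · rw [hx, hc3]; linarith
  · have h6 : c ^ 6 = u ^ 2 := by rw [← hc3]; ring
    rw [h6, hc3]; linear_combination u * hsum - huv
  · rw [hac2, ha2c, hc3]; linarith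
  · rw [ha2c, hc3]; simp only [hu_def, hv_def]; ring
  · ext i j
    fin_cases i <;> fin_cases j <;>
      simp [Matrix.mul_apply, Fin.sum_univ_three, Matrix.diagonal, Matrix.one_apply] <;>
      ring
  · rw [Matrix.trace_diagonal, Fin.sum_univ_three]
    simp only [Matrix.cons_val_zero, Matrix.cons_val_one, Matrix.head_cons,
      Matrix.cons_val_two, Matrix.tail_cons]
    linear_combination hac2 + ha2c + hc3 + hsum
  · intro j
    fin_cases j <;> simp [Matrix.diagonal]
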